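/- Let $g:\mathbb{R}^N\to\mathbb{R}$ be bounded and continuous, and suppose there exist $\alpha\in(0,1]$, $C>0$, $h_0>0$ such that for all $h\in(0,h_0)$ and every ball $B$ of radius $h$ contained in a fixed open set $\Omega$ with $\mathrm{dist}(B,\partial\Omega)\le 2h$: (i) $\sup_B g \le 1+Ch^\alpha$, and (ii) $\frac{1}{|B|}\int_B |g-1| \le Ch^\alpha$. Then $g(x)\to 1$ as $x\to\partial\Omega$ within $\Omega$, with the quantitative rate: for any sequence $x_n\in\Omega$ with $d_n=\mathrm{dist}(x_n,\partial\Omega)\to0$, along which $g$ is continuous with modulus $\omega(r)\le Lr$ on $B_{d_n/2}(x_n)$, one has $|g(x_n)-1|\le C'(d_n^{\alpha}+d_n^{\alpha/2})$ for a constant $C'$ depending only on $C,L,N$. -/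

import Mathlib

open MeasureTheory Metric Filter Set.Notation

lemma avg_lb {N : ℕ} {C α : ℝ} (g : EuclideanSpace ℝ (Fin N) → ℝ) (hg : Continuous g)
    (c : EuclideanSpace ℝ (Fin N)) (h m : ℝ) (hh : 0 < h)
    (hm : ∀ y ∈ ball c h, m ≤ |g y - 1|)
    (hint : (volume (ball c h)).toReal⁻¹ * (∫ y in ball c h, |g y - 1|) ≤ C * h ^ α) :
    m ≤ C * h ^ α := by
  have hV : 0 < (volume (ball c h)).toReal :=
    ENNReal.toReal_pos (ne_of_gt (measure_ball_pos _ _ hh)) (measure_ball_lt_top).ne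
  have hintg : IntegrableOn (fun y => |g y - 1|) (ball c h) :=
    (((hg.sub continuous_const).abs.continuousOn.integrableOn_compact
      (isCompact_closedBall c h))).mono_set ball_subset_closedBall
  have h1 : m * (volume (ball c h)).toReal ≤ ∫ y in ball c h, |g y - 1| :=
    by rw [mul_comm]; exact setIntegral_ge_of_const_le measurableSet_ball measure_ball_lt_top.ne hm hintg
  rw [inv_mul_le_iff₀ hV] at hint
  nlinarith

lemma ball_infDist_frontier_subset {N : ℕ} {Ω : Set (EuclideanSpace ℝ (Fin N))}
    (hΩ : IsOpen Ω) {x : EuclideanSpace ℝ (Fin N)} (hx : x ∈ Ω) {r : ℝ}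
    (hr : r ≤ Metric.infDist x (frontier Ω)) : ball x r ⊆ Ω := by
  intro y hy
  have hr0 : 0 < r := lt_of_le_of_lt dist_nonneg (mem_ball.mp hy)
  have hdisj : Disjoint (frontier Ω) (ball x r) :=
    (disjoint_ball_infDist.mono_left (ball_subset_ball hr)).symm
  haveI : PreconnectedSpace (ball x r) :=
    Subtype.preconnectedSpace (convex_ball x r).isPreconnected
  have hclopen : IsClopen ((ball x r) ↓∩ Ω) := isClopen_preimage_val hΩ hdisj
  have huniv : ((ball x r) ↓∩ Ω) = Set.univ :=
    hclopen.eq_univ ⟨⟨x, mem_ball_self hr0⟩, hx⟩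
  have : (⟨y, hy⟩ : ball x r) ∈ ((ball x r) ↓∩ Ω) := huniv ▸ Set.mem_univ _
  exact this

theorem stmt17 (N : ℕ) (C : ℝ) (L : NNReal) (hC : 0 < C) (hL : 0 < L) :
    ∃ C' > (0:ℝ),
    ∀ (Ω : Set (EuclideanSpace ℝ (Fin N))), IsOpen Ω → Ω.Nonempty →
    ∀ g : EuclideanSpace ℝ (Fin N) → ℝ, Continuous g → (∃ Kb : ℝ, ∀ x, |g x| ≤ Kb) →
    ∀ α : ℝ, α ∈ Set.Ioc (0:ℝ) 1 →
    ∀ h₀ : ℝ, 0 < h₀ →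
    (∀ h : ℝ, 0 < h → h < h₀ →
      ∀ c : EuclideanSpace ℝ (Fin N), ball c h ⊆ Ω →
        (∃ p ∈ ball c h, Metric.infDist p (frontier Ω) ≤ 2 * h) →
        (∀ x ∈ ball c h, g x ≤ 1 + C * h ^ α) ∧
        (volume (ball c h)).toReal⁻¹ * (∫ x in ball c h, |g x - 1|) ≤ C * h ^ α) →
    ∀ x : ℕ → EuclideanSpace ℝ (Fin N), (∀ n, x n ∈ Ω) →
    Tendsto (fun n => Metric.infDist (x n) (frontier Ω)) atTop (nhds 0) →
    (∀ n, LipschitzOnWith L g (ball (x n) (Metric.infDist (x n) (frontier Ω) / 2))) →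
    ∀ᶠ n in atTop,
      |g (x n) - 1| ≤ C' * ((Metric.infDist (x n) (frontier Ω)) ^ α
        + (Metric.infDist (x n) (frontier Ω)) ^ (α / 2)) := by
  refine ⟨2 * C + (L : ℝ) + 1, by positivity, ?_⟩
  intro Ω hΩ hΩne g hg hgb α hα h₀ hh₀ hyp x hxΩ htend hlip
  obtain ⟨hα0, hα1⟩ := hα
  by_cases hfr : frontier Ω = ∅
  · refine Filter.Eventually.of_forall fun n => ?_
    have hd : Metric.infDist (x n) (frontier Ω) = 0 := by
      rw [hfr]; exact Metric.infDist_empty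
    rw [hd, Real.zero_rpow (ne_of_gt hα0), Real.zero_rpow (by positivity : α / 2 ≠ 0)]
    have key : |g (x n) - 1| ≤ 0 := by
      by_contra hM
      push_neg at hM
      set M := |g (x n) - 1| with hMdef
      obtain ⟨δ, hδ0, hδ⟩ := Metric.continuous_iff.mp hg (x n) (M / 2) (by linarith)
      obtain ⟨ε, hε0, hεsub⟩ := Metric.isOpen_iff.mp hΩ (x n) (hxΩ n)
      set t := min 1 ((M / (4 * C)) ^ (1 / α)) with htdef
      have ht0 : 0 < t := lt_min one_pos (Real.rpow_pos_of_pos (by positivity) _)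
      have htα : C * t ^ α ≤ M / 4 := by
        have h1 : t ^ α ≤ ((M / (4 * C)) ^ (1 / α)) ^ α :=
          Real.rpow_le_rpow ht0.le (min_le_right _ _) hα0.le
        rw [← Real.rpow_mul (by positivity), one_div,
          inv_mul_cancel₀ (ne_of_gt hα0), Real.rpow_one] at h1
        have h2 : C * t ^ α ≤ C * (M / (4 * C)) :=
          mul_le_mul_of_nonneg_left h1 hC.le
        have h3 : C * (M / (4 * C)) = M / 4 := by field_simp
        linarith
      set h := min t (min δ (min ε h₀)) / 2 with hhdef
      have hmin0 : 0 < min t (min δ (min ε h₀)) := lt_min ht0 (lt_min hδ0 (lt_min hε0 hh₀))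
      have hh : 0 < h := by rw [hhdef]; linarith
      have hle1 : min t (min δ (min ε h₀)) ≤ t := min_le_left _ _
      have hle2 : min t (min δ (min ε h₀)) ≤ δ := (min_le_right _ _).trans (min_le_left _ _)
      have hle3 : min t (min δ (min ε h₀)) ≤ ε :=
        (min_le_right _ _).trans ((min_le_right _ _).trans (min_le_left _ _))
      have hle4 : min t (min δ (min ε h₀)) ≤ h₀ :=
        (min_le_right _ _).trans ((min_le_right _ _).trans (min_le_right _ _))
      have hht : h ≤ t := by rw [hhdef]; linarith
      have hhδ : h < δ := by rw [hhdef]; linarith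
      have hhε : h < ε := by rw [hhdef]; linarith
      have hhh₀ : h < h₀ := by rw [hhdef]; linarith
      have hsub : ball (x n) h ⊆ Ω := (ball_subset_ball hhε.le).trans hεsub
      obtain ⟨-, havg⟩ := hyp h hh hhh₀ (x n) hsub
        ⟨x n, mem_ball_self hh, by rw [hfr, Metric.infDist_empty]; linarith⟩
      have hmb : ∀ y ∈ ball (x n) h, M / 2 ≤ |g y - 1| := by
        intro y hy
        have h2 := hδ y (lt_trans (mem_ball.mp hy) hhδ)
        rw [Real.dist_eq] at h2
        have htri := abs_sub_le (g (x n)) (g y) 1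
        have hcomm : |g (x n) - g y| = |g y - g (x n)| := abs_sub_comm _ _
        linarith
      have hfin := avg_lb g hg (x n) h (M / 2) hh hmb havg
      have hmono : C * h ^ α ≤ C * t ^ α :=
        mul_le_mul_of_nonneg_left (Real.rpow_le_rpow hh.le hht hα0.le) hC.le
      linarith
    have : (2 * C + (L : ℝ) + 1) * (0 + 0) = 0 := by ring
    rw [this]
    exact key
  · have hfr' : (frontier Ω).Nonempty := Set.nonempty_iff_ne_empty.mpr hfr
    have hev : ∀ᶠ n in atTop,
        Metric.infDist (x n) (frontier Ω) < min 1 (2 * h₀) :=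
      htend.eventually_lt_const (lt_min one_pos (by linarith))
    filter_upwards [hev] with n hn
    set d := Metric.infDist (x n) (frontier Ω) with hdd
    have hd1 : d < 1 := lt_of_lt_of_le hn (min_le_left _ _)
    have hdh₀ : d < 2 * h₀ := lt_of_lt_of_le hn (min_le_right _ _)
    have hd0 : 0 < d := by
      rw [hdd]
      refine (isClosed_frontier.notMem_iff_infDist_pos hfr').mp ?_
      intro hmem
      rw [hΩ.frontier_eq] at hmem
      exact hmem.2 (hxΩ n)
    have hsub : ball (x n) (d / 2) ⊆ Ω :=
      ball_infDist_frontier_subset hΩ (hxΩ n) (by rw [← hdd]; linarith)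
    obtain ⟨hub, havg⟩ := hyp (d / 2) (by linarith) (by linarith) (x n) hsub
      ⟨x n, mem_ball_self (by linarith), by rw [← hdd]; linarith⟩
    set M := |g (x n) - 1| with hMdef
    have hM0 : 0 ≤ M := abs_nonneg _
    have hdα : 0 ≤ d ^ α := Real.rpow_nonneg hd0.le _
    have hdα2 : 0 ≤ d ^ (α / 2) := Real.rpow_nonneg hd0.le _
    have hddα2 : d ≤ d ^ (α / 2) := by
      calc d = d ^ (1 : ℝ) := (Real.rpow_one d).symm
        _ ≤ d ^ (α / 2) :=
          Real.rpow_le_rpow_of_exponent_ge hd0 hd1.le (by linarith)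
    by_cases hcase : M < 2 * (L : ℝ) * (d / 2)
    · have hLd : (L : ℝ) * d ≤ (L : ℝ) * d ^ (α / 2) :=
        mul_le_mul_of_nonneg_left hddα2 L.coe_nonneg
      have e1 : 0 ≤ (2 * C + (L : ℝ) + 1) * d ^ α := mul_nonneg (by positivity) hdα
      have e2 : 0 ≤ (2 * C + 1) * d ^ (α / 2) := mul_nonneg (by positivity) hdα2
      nlinarith [e1, e2, hLd, hcase]
    · push_neg at hcase
      have hmb : ∀ y ∈ ball (x n) (d / 2), M / 2 ≤ |g y - 1| := by
        intro y hy
        have hxmem : x n ∈ ball (x n) (d / 2) := mem_ball_self (by linarith)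
        have hlipb := (hlip n).dist_le_mul y (by rw [← hdd]; exact hy) (x n)
          (by rw [← hdd]; exact hxmem)
        have hdist : dist (g y) (g (x n)) ≤ (L : ℝ) * (d / 2) :=
          le_trans hlipb (mul_le_mul_of_nonneg_left (mem_ball.mp hy).le L.coe_nonneg)
        rw [Real.dist_eq] at hdist
        have htri := abs_sub_le (g (x n)) (g y) 1
        have hcomm : |g (x n) - g y| = |g y - g (x n)| := abs_sub_comm _ _
        linarith
      have hkey := avg_lb g hg (x n) (d / 2) (M / 2) (by linarith) hmb havg
      have hhd : (d / 2) ^ α ≤ d ^ α :=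
        Real.rpow_le_rpow (by linarith) (by linarith) hα0.le
      have e3 : C * (d / 2) ^ α ≤ C * d ^ α := mul_le_mul_of_nonneg_left hhd hC.le
      have e4 : 0 ≤ ((L : ℝ) + 1) * d ^ α := mul_nonneg (by positivity) hdα
      have e5 : 0 ≤ (2 * C + (L : ℝ) + 1) * d ^ (α / 2) := mul_nonneg (by positivity) hdα2
      nlinarith [e3, e4, e5, hkey]
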